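/- The map L₇(F) = F − 2F₈(F) is an involutive linear isometry of 𝒬𝒦𝔽 = {F ∈ (v𝔽)′ : F = F₄(F) = −F₅(F)}, commuting with the action on 𝔽 of every linear isometry A of V with A∘φ = φ∘A and Aξ = ξ, and it yields the orthogonal decomposition 𝒬𝒦𝔽 = 𝔽₃ ⊕ 𝔽₅, where 𝔽₃ = {F ∈ 𝔽 : F = F₈(F)} is the (−1)-eigenspace and 𝔽₅ = {F ∈ 𝔽 : F = F₄(F) = −F₅(F) and f*(F)(ξ) = 0} is the (+1)-eigenspace; the components of F ∈ 𝒬𝒦𝔽 in 𝔽₃ and 𝔽₅ are F₈(F) and (1/4){F₂(F)+F₄(F)−F₅(F)−F₆(F)−4F₈(F)}. -/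

import Mathlib

open scoped BigOperators RealInnerProductSpace

noncomputable section

variable {V : Type*} [NormedAddCommGroup V] [InnerProductSpace ℝ V]

/-- A map `V → V → V → ℝ` linear in each of its three arguments. -/
def Trilinear (F : V → V → V → ℝ) : Prop :=
  (∀ y z, IsLinearMap ℝ fun x => F x y z) ∧
  (∀ x z, IsLinearMap ℝ fun y => F x y z) ∧
  (∀ x y, IsLinearMap ℝ fun z => F x y z)

/-- Almost contact metric structure `(φ, ξ, η, g)` on `V` with `dim V = 2n+1`. -/
def ACM (n : ℕ) (φ : V →ₗ[ℝ] V) (ξ : V) (η : V →ₗ[ℝ] ℝ) : Prop :=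
  Module.finrank ℝ V = 2 * n + 1 ∧
  (∀ x, φ (φ x) = -x + η x • ξ) ∧
  φ ξ = 0 ∧
  (∀ x, η (φ x) = 0) ∧
  ⟪ξ, ξ⟫ = 1 ∧
  (∀ x y, ⟪φ x, φ y⟫ = ⟪x, y⟫ - η x * η y)

/-- Membership in the space `𝔽` of trilinear forms with the symmetries (1). -/
def InF (φ : V →ₗ[ℝ] V) (ξ : V) (η : V →ₗ[ℝ] ℝ) (F : V → V → V → ℝ) : Prop :=
  Trilinear F ∧
  (∀ x y z, F x y z = -F x z y) ∧
  (∀ x y z, F x y z = -F x (φ y) (φ z) + η y * F x ξ z + η z * F x y ξ)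

/-- `h x = -φ²x`. -/
def hMap (φ : V →ₗ[ℝ] V) (x : V) : V := -φ (φ x)

/-- `hF(x,y,z) = F(hx,hy,hz)`. -/
def hF (φ : V →ₗ[ℝ] V) (F : V → V → V → ℝ) : V → V → V → ℝ :=
  fun x y z => F (hMap φ x) (hMap φ y) (hMap φ z)

def F1 (ξ : V) (η : V →ₗ[ℝ] ℝ) (F : V → V → V → ℝ) : V → V → V → ℝ :=
  fun x y z => η x * F ξ y z

def F2 (ξ : V) (η : V →ₗ[ℝ] ℝ) (F : V → V → V → ℝ) : V → V → V → ℝ :=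
  fun x y z => η y * F x ξ z - η z * F x ξ y

def F3 (ξ : V) (η : V →ₗ[ℝ] ℝ) (F : V → V → V → ℝ) : V → V → V → ℝ :=
  fun x y z => η x * η y * F ξ ξ z - η x * η z * F ξ ξ y

def F4 (φ : V →ₗ[ℝ] V) (ξ : V) (η : V →ₗ[ℝ] ℝ) (F : V → V → V → ℝ) : V → V → V → ℝ :=
  fun x y z => η y * F (φ x) ξ (φ z) - η z * F (φ x) ξ (φ y)

def F5 (ξ : V) (η : V →ₗ[ℝ] ℝ) (F : V → V → V → ℝ) : V → V → V → ℝ :=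
  fun x y z => η y * F z ξ x - η z * F y ξ x

def F6 (φ : V →ₗ[ℝ] V) (ξ : V) (η : V →ₗ[ℝ] ℝ) (F : V → V → V → ℝ) : V → V → V → ℝ :=
  fun x y z => η y * F (φ z) ξ (φ x) - η z * F (φ y) ξ (φ x)

/-- `f(F)(z) = Σᵢ F(eᵢ, eᵢ, z)`. -/
def fTr {ι : Type*} [Fintype ι] (e : OrthonormalBasis ι ℝ V) (F : V → V → V → ℝ) (z : V) : ℝ :=
  ∑ i, F (e i) (e i) z

/-- `f*(F)(z) = Σᵢ F(eᵢ, φ eᵢ, z)`. -/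
def fTrStar {ι : Type*} [Fintype ι] (φ : V →ₗ[ℝ] V) (e : OrthonormalBasis ι ℝ V)
    (F : V → V → V → ℝ) (z : V) : ℝ :=
  ∑ i, F (e i) (φ (e i)) z

/-- The inner product on `𝔽`: `⟨F,G⟩ = Σ_{i,j,k} F(eᵢ,eⱼ,e_k) G(eᵢ,eⱼ,e_k)`. -/
def innerF {ι : Type*} [Fintype ι] (e : OrthonormalBasis ι ℝ V) (F G : V → V → V → ℝ) : ℝ :=
  ∑ i, ∑ j, ∑ k, F (e i) (e j) (e k) * G (e i) (e j) (e k)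

def F7 (n : ℕ) {ι : Type*} [Fintype ι] (e : OrthonormalBasis ι ℝ V) (ξ : V) (η : V →ₗ[ℝ] ℝ)
    (F : V → V → V → ℝ) : V → V → V → ℝ :=
  fun x y z => (1 / (2 * (n : ℝ))) * fTr e F ξ * (η z * ⟪x, y⟫ - η y * ⟪x, z⟫)

def F8 (n : ℕ) (φ : V →ₗ[ℝ] V) {ι : Type*} [Fintype ι] (e : OrthonormalBasis ι ℝ V) (ξ : V)
    (η : V →ₗ[ℝ] ℝ) (F : V → V → V → ℝ) : V → V → V → ℝ :=
  fun x y z => -(1 / (2 * (n : ℝ))) * fTrStar φ e F ξ * (η z * ⟪x, φ y⟫ - η y * ⟪x, φ z⟫)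

def F9 (n : ℕ) (φ : V →ₗ[ℝ] V) {ι : Type*} [Fintype ι] (e : OrthonormalBasis ι ℝ V)
    (F : V → V → V → ℝ) : V → V → V → ℝ :=
  fun x y z => (1 / (2 * ((n : ℝ) - 1))) *
    (⟪hMap φ x, hMap φ y⟫ * fTr e F z - ⟪hMap φ x, hMap φ z⟫ * fTr e F y
      - ⟪x, φ y⟫ * fTr e F (φ z) + ⟪x, φ z⟫ * fTr e F (φ y))

def F10 (φ : V →ₗ[ℝ] V) (F : V → V → V → ℝ) : V → V → V → ℝ :=
  fun x y z => (1 / 2) * (F x y z + F (φ x) (φ y) z)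

def F11 (φ : V →ₗ[ℝ] V) (F : V → V → V → ℝ) : V → V → V → ℝ :=
  fun x y z => (1 / 6) * (F x y z + F y z x + F z x y
    - F (φ x) (φ y) z - F (φ y) (φ z) x - F (φ z) (φ x) y)

def F12 (φ : V →ₗ[ℝ] V) (F : V → V → V → ℝ) : V → V → V → ℝ :=
  fun x y z => (1 / 2) * (F x y z - F (φ x) (φ y) z)

/-- The action of a linear isometry `A` of `V` on trilinear forms:
`(A·F)(x,y,z) = F(A⁻¹x, A⁻¹y, A⁻¹z)`. -/
def actA (A : V ≃ₗᵢ[ℝ] V) (F : V → V → V → ℝ) : V → V → V → ℝ :=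
  fun x y z => F (A.symm x) (A.symm y) (A.symm z)

def L1 (ξ : V) (η : V →ₗ[ℝ] ℝ) (F : V → V → V → ℝ) : V → V → V → ℝ :=
  fun x y z => F x y z - 2 * F3 ξ η F x y z

def L2 (ξ : V) (η : V →ₗ[ℝ] ℝ) (F : V → V → V → ℝ) : V → V → V → ℝ :=
  fun x y z => F x y z - 2 * (F1 ξ η F x y z + F2 ξ η F x y z)

def L3 (ξ : V) (η : V →ₗ[ℝ] ℝ) (F : V → V → V → ℝ) : V → V → V → ℝ :=
  fun x y z => F2 ξ η F x y z - F1 ξ η F x y z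

def L4 (φ : V →ₗ[ℝ] V) (ξ : V) (η : V →ₗ[ℝ] ℝ) (F : V → V → V → ℝ) : V → V → V → ℝ :=
  fun x y z => -F4 φ ξ η F x y z

def L5 (ξ : V) (η : V →ₗ[ℝ] ℝ) (F : V → V → V → ℝ) : V → V → V → ℝ :=
  fun x y z => -F5 ξ η F x y z

def L6 (n : ℕ) {ι : Type*} [Fintype ι] (e : OrthonormalBasis ι ℝ V) (ξ : V) (η : V →ₗ[ℝ] ℝ)
    (F : V → V → V → ℝ) : V → V → V → ℝ :=
  fun x y z => F x y z - 2 * F7 n e ξ η F x y z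

def L7 (n : ℕ) (φ : V →ₗ[ℝ] V) {ι : Type*} [Fintype ι] (e : OrthonormalBasis ι ℝ V) (ξ : V)
    (η : V →ₗ[ℝ] ℝ) (F : V → V → V → ℝ) : V → V → V → ℝ :=
  fun x y z => F x y z - 2 * F8 n φ e ξ η F x y z

/-- The subspace `𝔽₁ = {F ∈ 𝔽 : F = F₃(F)}`. -/
def MemF1sub (φ : V →ₗ[ℝ] V) (ξ : V) (η : V →ₗ[ℝ] ℝ) (F : V → V → V → ℝ) : Prop :=
  InF φ ξ η F ∧ F = F3 ξ η F

/-- The subspace `v𝔽 = {F ∈ 𝔽 : hF = 0, ω(F) = 0}`. -/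
def MemVF (φ : V →ₗ[ℝ] V) (ξ : V) (η : V →ₗ[ℝ] ℝ) (F : V → V → V → ℝ) : Prop :=
  InF φ ξ η F ∧ hF φ F = 0 ∧ ∀ z, F ξ ξ z = 0

/-- The subspace `h𝔽 = {F ∈ 𝔽 : F₁(F) = F₂(F) = 0}`. -/
def MemHF (φ : V →ₗ[ℝ] V) (ξ : V) (η : V →ₗ[ℝ] ℝ) (F : V → V → V → ℝ) : Prop :=
  InF φ ξ η F ∧ F1 ξ η F = 0 ∧ F2 ξ η F = 0

/-- The subspace `(v𝔽)′ = {F ∈ 𝔽 : hF = 0, F(ξ,·,·) = 0}`. -/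
def MemVF' (φ : V →ₗ[ℝ] V) (ξ : V) (η : V →ₗ[ℝ] ℝ) (F : V → V → V → ℝ) : Prop :=
  InF φ ξ η F ∧ hF φ F = 0 ∧ ∀ y z, F ξ y z = 0

/-- The subspace `𝔽₈ = {F ∈ 𝔽 : hF = 0, F(·,·,ξ) = 0}`. -/
def MemF8sub (φ : V →ₗ[ℝ] V) (ξ : V) (η : V →ₗ[ℝ] ℝ) (F : V → V → V → ℝ) : Prop :=
  InF φ ξ η F ∧ hF φ F = 0 ∧ ∀ x y, F x y ξ = 0

/-- The subspace `𝒩 = {F ∈ (v𝔽)′ : F = F₄(F)}`. -/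
def MemN (φ : V →ₗ[ℝ] V) (ξ : V) (η : V →ₗ[ℝ] ℝ) (F : V → V → V → ℝ) : Prop :=
  MemVF' φ ξ η F ∧ F = F4 φ ξ η F

/-- The subspace `𝒩̃ = {F ∈ (v𝔽)′ : F = -F₄(F)}`. -/
def MemNt (φ : V →ₗ[ℝ] V) (ξ : V) (η : V →ₗ[ℝ] ℝ) (F : V → V → V → ℝ) : Prop :=
  MemVF' φ ξ η F ∧ F = -F4 φ ξ η F

/-- The subspace `𝒬𝒮𝔽 = {F ∈ (v𝔽)′ : F = F₄(F) = F₅(F)}`. -/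
def MemQS (φ : V →ₗ[ℝ] V) (ξ : V) (η : V →ₗ[ℝ] ℝ) (F : V → V → V → ℝ) : Prop :=
  MemVF' φ ξ η F ∧ F = F4 φ ξ η F ∧ F = F5 ξ η F

/-- The subspace `𝒬𝒦𝔽 = {F ∈ (v𝔽)′ : F = F₄(F) = -F₅(F)}`. -/
def MemQK (φ : V →ₗ[ℝ] V) (ξ : V) (η : V →ₗ[ℝ] ℝ) (F : V → V → V → ℝ) : Prop :=
  MemVF' φ ξ η F ∧ F = F4 φ ξ η F ∧ F = -F5 ξ η F

/-- The subspace `𝔽₆ = {F ∈ (v𝔽)′ : F = -F₄(F) = F₅(F)}`. -/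
def MemF6sub (φ : V →ₗ[ℝ] V) (ξ : V) (η : V →ₗ[ℝ] ℝ) (F : V → V → V → ℝ) : Prop :=
  MemVF' φ ξ η F ∧ F = -F4 φ ξ η F ∧ F = F5 ξ η F

/-- The subspace `𝔽₇ = {F ∈ (v𝔽)′ : F = -F₄(F) = -F₅(F)}`. -/
def MemF7sub (φ : V →ₗ[ℝ] V) (ξ : V) (η : V →ₗ[ℝ] ℝ) (F : V → V → V → ℝ) : Prop :=
  MemVF' φ ξ η F ∧ F = -F4 φ ξ η F ∧ F = -F5 ξ η F

/-- The subspace `𝔽₂ = {F ∈ 𝔽 : F = F₇(F)}`. -/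
def MemF2sub (n : ℕ) {ι : Type*} [Fintype ι] (e : OrthonormalBasis ι ℝ V) (φ : V →ₗ[ℝ] V)
    (ξ : V) (η : V →ₗ[ℝ] ℝ) (F : V → V → V → ℝ) : Prop :=
  InF φ ξ η F ∧ F = F7 n e ξ η F

/-- The subspace `𝔽₃ = {F ∈ 𝔽 : F = F₈(F)}`. -/
def MemF3sub (n : ℕ) {ι : Type*} [Fintype ι] (e : OrthonormalBasis ι ℝ V) (φ : V →ₗ[ℝ] V)
    (ξ : V) (η : V →ₗ[ℝ] ℝ) (F : V → V → V → ℝ) : Prop :=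
  InF φ ξ η F ∧ F = F8 n φ e ξ η F

/-- The subspace `𝔽₄ = {F ∈ 𝔽 : F = F₄(F) = F₅(F), f(F)(ξ) = 0}`. -/
def MemF4sub (n : ℕ) {ι : Type*} [Fintype ι] (e : OrthonormalBasis ι ℝ V) (φ : V →ₗ[ℝ] V)
    (ξ : V) (η : V →ₗ[ℝ] ℝ) (F : V → V → V → ℝ) : Prop :=
  InF φ ξ η F ∧ F = F4 φ ξ η F ∧ F = F5 ξ η F ∧ fTr e F ξ = 0

/-- The subspace `𝔽₅ = {F ∈ 𝔽 : F = F₄(F) = -F₅(F), f*(F)(ξ) = 0}`. -/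
def MemF5sub (n : ℕ) {ι : Type*} [Fintype ι] (e : OrthonormalBasis ι ℝ V) (φ : V →ₗ[ℝ] V)
    (ξ : V) (η : V →ₗ[ℝ] ℝ) (F : V → V → V → ℝ) : Prop :=
  InF φ ξ η F ∧ F = F4 φ ξ η F ∧ F = -F5 ξ η F ∧ fTrStar φ e F ξ = 0

/-- The subspace `𝔽₄ = {F ∈ (v𝔽)′ : F = F₄(F) = F₅(F), f(F)(ξ) = 0}`. -/
def MemF4sub' (n : ℕ) {ι : Type*} [Fintype ι] (e : OrthonormalBasis ι ℝ V) (φ : V →ₗ[ℝ] V)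
    (ξ : V) (η : V →ₗ[ℝ] ℝ) (F : V → V → V → ℝ) : Prop :=
  MemVF' φ ξ η F ∧ F = F4 φ ξ η F ∧ F = F5 ξ η F ∧ fTr e F ξ = 0

/-- The subspace `𝔽₅ = {F ∈ (v𝔽)′ : F = F₄(F) = -F₅(F), f*(F)(ξ) = 0}`. -/
def MemF5sub' (n : ℕ) {ι : Type*} [Fintype ι] (e : OrthonormalBasis ι ℝ V) (φ : V →ₗ[ℝ] V)
    (ξ : V) (η : V →ₗ[ℝ] ℝ) (F : V → V → V → ℝ) : Prop :=
  MemVF' φ ξ η F ∧ F = F4 φ ξ η F ∧ F = -F5 ξ η F ∧ fTrStar φ e F ξ = 0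

/-- The subspace `𝔽₉ = {F ∈ 𝔽 : F = hF = F₉(F)}`. -/
def MemF9sub (n : ℕ) {ι : Type*} [Fintype ι] (e : OrthonormalBasis ι ℝ V) (φ : V →ₗ[ℝ] V)
    (ξ : V) (η : V →ₗ[ℝ] ℝ) (F : V → V → V → ℝ) : Prop :=
  InF φ ξ η F ∧ F = hF φ F ∧ F = F9 n φ e F

/-- The subspace `𝔽₁₀ = {F ∈ 𝔽 : F = hF = F₁₀(F) - F₉(F)}`. -/
def MemF10sub (n : ℕ) {ι : Type*} [Fintype ι] (e : OrthonormalBasis ι ℝ V) (φ : V →ₗ[ℝ] V)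
    (ξ : V) (η : V →ₗ[ℝ] ℝ) (F : V → V → V → ℝ) : Prop :=
  InF φ ξ η F ∧ F = hF φ F ∧ F = F10 φ F - F9 n φ e F

/-- The subspace `𝔽₁₁ = {F ∈ 𝔽 : F = hF = F₁₁(F)}`. -/
def MemF11sub (φ : V →ₗ[ℝ] V) (ξ : V) (η : V →ₗ[ℝ] ℝ) (F : V → V → V → ℝ) : Prop :=
  InF φ ξ η F ∧ F = hF φ F ∧ F = F11 φ F

/-- The subspace `𝔽₁₂ = {F ∈ 𝔽 : F = hF = F₁₂(F) - F₁₁(F)}`. -/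
def MemF12sub (φ : V →ₗ[ℝ] V) (ξ : V) (η : V →ₗ[ℝ] ℝ) (F : V → V → V → ℝ) : Prop :=
  InF φ ξ η F ∧ F = hF φ F ∧ F = F12 φ F - F11 φ F

section AuxACM

variable {V : Type*} [NormedAddCommGroup V] [InnerProductSpace ℝ V]
variable {n : ℕ} {φ : V →ₗ[ℝ] V} {ξ : V} {η : V →ₗ[ℝ] ℝ}

lemma aux_eta_xi (h : ACM n φ ξ η) : η ξ = 1 := by
  obtain ⟨-, h2, h3, -, h5, -⟩ := h
  have := h2 ξ
  rw [h3, map_zero] at this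
  have h6 : η ξ • ξ = ξ := by linear_combination (norm := module) -this
  have := congrArg (fun v => ⟪v, ξ⟫) h6
  simp only [real_inner_smul_left, h5, mul_one] at this
  exact this

lemma aux_eta_eq (h : ACM n φ ξ η) (x : V) : η x = ⟪x, ξ⟫ := by
  have hx := aux_eta_xi h
  obtain ⟨-, -, h3, -, -, h6⟩ := h
  have := h6 x ξ
  rw [h3, inner_zero_right, hx, mul_one] at this
  linarith

lemma aux_eta_phi (h : ACM n φ ξ η) (x : V) : η (φ x) = 0 := h.2.2.2.1 x

lemma aux_inner_phi_xi (h : ACM n φ ξ η) (x : V) : ⟪φ x, ξ⟫ = 0 := by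
  rw [← aux_eta_eq h]; exact aux_eta_phi h x

lemma aux_skew (h : ACM n φ ξ η) (x y : V) : ⟪φ x, y⟫ = -⟪x, φ y⟫ := by
  have h2 := h.2.1
  have h6 := h.2.2.2.2.2
  have e1 : ⟪φ x, φ (φ y)⟫ = ⟪x, φ y⟫ := by
    rw [h6 x (φ y), aux_eta_phi h, mul_zero, sub_zero]
  rw [h2 y] at e1
  rw [inner_add_right, inner_neg_right, real_inner_smul_right, aux_inner_phi_xi h] at e1
  linarith

lemma aux_hMap (h : ACM n φ ξ η) (x : V) : hMap φ x = x - η x • ξ := by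
  simp [hMap, h.2.1 x]; module

end AuxACM
section AuxSum

variable {V : Type*} [NormedAddCommGroup V] [InnerProductSpace ℝ V]
variable {n : ℕ} {φ : V →ₗ[ℝ] V} {ξ : V} {η : V →ₗ[ℝ] ℝ}
variable {ι : Type*} [Fintype ι]

lemma aux_sum_inner (e : OrthonormalBasis ι ℝ V) (g : V → ℝ) (hg : IsLinearMap ℝ g) (x : V) :
    ∑ i, ⟪e i, x⟫ * g (e i) = g x := by
  conv_rhs => rw [← e.sum_repr' x, ← hg.mk'_apply, map_sum]
  simp [smul_eq_mul]

lemma aux_trace_transpose (h : ACM n φ ξ η) (e : OrthonormalBasis ι ℝ V) (f : V → V → ℝ)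
    (hf1 : ∀ y, IsLinearMap ℝ fun x => f x y) (hf2 : ∀ x, IsLinearMap ℝ (f x)) :
    ∑ j, f (φ (e j)) (e j) = -∑ k, f (e k) (φ (e k)) := by
  calc ∑ j, f (φ (e j)) (e j)
      = ∑ j, ∑ k, ⟪e k, φ (e j)⟫ * f (e k) (e j) := by
        refine Finset.sum_congr rfl fun j _ => ?_
        exact (aux_sum_inner e (fun v => f v (e j)) (hf1 (e j)) (φ (e j))).symm
    _ = ∑ k, ∑ j, -(⟪e j, φ (e k)⟫ * f (e k) (e j)) := by
        rw [Finset.sum_comm]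
        refine Finset.sum_congr rfl fun k _ => Finset.sum_congr rfl fun j _ => ?_
        have hs : ⟪e k, φ (e j)⟫ = -⟪e j, φ (e k)⟫ := by
          rw [real_inner_comm]; exact aux_skew h _ _
        rw [hs]; ring
    _ = -∑ k, f (e k) (φ (e k)) := by
        have hk : ∀ k : ι, ∑ j, -(⟪e j, φ (e k)⟫ * f (e k) (e j)) = -f (e k) (φ (e k)) :=
          fun k => by
            rw [Finset.sum_neg_distrib, aux_sum_inner e (f (e k)) (hf2 (e k)) (φ (e k))]
        rw [Finset.sum_congr rfl fun k _ => hk k, Finset.sum_neg_distrib]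

end AuxSum
section AuxPhi

variable {V : Type*} [NormedAddCommGroup V] [InnerProductSpace ℝ V]
variable {n : ℕ} {φ : V →ₗ[ℝ] V} {ξ : V} {η : V →ₗ[ℝ] ℝ}

/-- The fundamental form `Φ(x,y,z) = η(z)⟪x,φy⟫ - η(y)⟪x,φz⟫`. -/
def auxPhi (φ : V →ₗ[ℝ] V) (η : V →ₗ[ℝ] ℝ) : V → V → V → ℝ :=
  fun x y z => η z * ⟪x, φ y⟫ - η y * ⟪x, φ z⟫

lemma aux_F8_eq {ι : Type*} [Fintype ι] (e : OrthonormalBasis ι ℝ V) (F : V → V → V → ℝ) :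
    F8 n φ e ξ η F =
      fun x y z => (-(1 / (2 * (n : ℝ))) * fTrStar φ e F ξ) * auxPhi φ η x y z := rfl

lemma aux_tri_Phi : Trilinear (auxPhi φ η) := by
  refine ⟨fun y z => ⟨?_, ?_⟩, fun x z => ⟨?_, ?_⟩, fun x y => ⟨?_, ?_⟩⟩ <;> intros <;>
    simp [auxPhi, inner_add_left, inner_add_right, real_inner_smul_left,
      real_inner_smul_right, map_add, map_smul, smul_eq_mul] <;> ring

lemma aux_Phi_x_xi (h : ACM n φ ξ η) (x z : V) : auxPhi φ η x ξ z = -⟪x, φ z⟫ := by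
  simp [auxPhi, h.2.2.1, aux_eta_xi h]

lemma aux_Phi_phix_xi (h : ACM n φ ξ η) (x z : V) :
    auxPhi φ η (φ x) ξ (φ z) = -⟪x, φ z⟫ := by
  rw [aux_Phi_x_xi h, h.2.2.2.2.2 x (φ z), aux_eta_phi h, mul_zero, sub_zero]

lemma aux_eta_hMap (h : ACM n φ ξ η) (x : V) : η (hMap φ x) = 0 := by
  rw [aux_hMap h, map_sub, map_smul, smul_eq_mul, aux_eta_xi h, mul_one, sub_self]

lemma aux_inner_xi_phi (h : ACM n φ ξ η) (x : V) : ⟪ξ, φ x⟫ = 0 := by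
  rw [real_inner_comm]; exact aux_inner_phi_xi h x

lemma aux_memQK_Phi (h : ACM n φ ξ η) : MemQK φ ξ η (auxPhi φ η) := by
  have hsk := aux_skew h
  refine ⟨⟨⟨aux_tri_Phi, fun x y z => by simp only [auxPhi]; ring, fun x y z => ?_⟩, ?_, ?_⟩, ?_, ?_⟩
  · -- the φ-symmetry
    have h1 : auxPhi φ η x (φ y) (φ z) = 0 := by
      simp [auxPhi, aux_eta_phi h]
    have h2 : auxPhi φ η x ξ z = -⟪x, φ z⟫ := aux_Phi_x_xi h x z
    have h3 : auxPhi φ η x y ξ = ⟪x, φ y⟫ := by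
      simp [auxPhi, h.2.2.1, aux_eta_xi h]
    rw [h1, h2, h3]
    simp [auxPhi]; ring
  · -- hF = 0
    funext x y z
    simp only [hF, Pi.zero_apply]
    show auxPhi φ η _ _ _ = 0
    simp [auxPhi, aux_eta_hMap h]
  · -- Phi ξ y z = 0
    intro y z
    simp [auxPhi, aux_inner_xi_phi h]
  · -- Phi = F4 Phi
    funext x y z
    show auxPhi φ η x y z = F4 φ ξ η (auxPhi φ η) x y z
    simp only [F4, aux_Phi_phix_xi h]
    simp [auxPhi]; ring
  · -- Phi = -F5 Phi
    funext x y z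
    show auxPhi φ η x y z = -F5 ξ η (auxPhi φ η) x y z
    simp only [F5, Pi.neg_apply]
    rw [aux_Phi_x_xi h z x, aux_Phi_x_xi h y x]
    have e1 : ⟪z, φ x⟫ = -⟪x, φ z⟫ := by rw [real_inner_comm]; exact hsk x z
    have e2 : ⟪y, φ x⟫ = -⟪x, φ y⟫ := by rw [real_inner_comm]; exact hsk x y
    simp [auxPhi]
    rw [e1, e2]; ring

lemma aux_fstar_Phi (h : ACM n φ ξ η) {ι : Type*} [Fintype ι]
    (e : OrthonormalBasis ι ℝ V) (hcard : (Fintype.card ι : ℝ) = 2 * n + 1) :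
    fTrStar φ e (auxPhi φ η) ξ = -(2 * (n : ℝ)) := by
  unfold fTrStar
  have hterm : ∀ i, auxPhi φ η (e i) (φ (e i)) ξ = -1 + ⟪ξ, e i⟫ * ⟪e i, ξ⟫ := by
    intro i
    simp only [auxPhi, aux_eta_xi h, aux_eta_phi h, h.2.2.1, inner_zero_right, mul_zero,
      one_mul, zero_mul, sub_zero]
    rw [h.2.1 (e i), inner_add_right, inner_neg_right, real_inner_smul_right]
    have : ⟪e i, e i⟫ = 1 := by
      have := e.orthonormal.1 i
      rw [real_inner_self_eq_norm_sq, this]; norm_num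
    rw [this, ← aux_eta_eq h, aux_eta_eq h (e i), real_inner_comm (e i) ξ]
    try ring
  rw [Finset.sum_congr rfl fun i _ => hterm i, Finset.sum_add_distrib,
    e.sum_inner_mul_inner ξ ξ, h.2.2.2.2.1]
  simp only [Finset.sum_const, Finset.card_univ, nsmul_eq_mul, mul_neg_one]
  rw [hcard]; ring

end AuxPhi
section AuxQK

variable {V : Type*} [NormedAddCommGroup V] [InnerProductSpace ℝ V]
variable {n : ℕ} {φ : V →ₗ[ℝ] V} {ξ : V} {η : V →ₗ[ℝ] ℝ}

lemma aux_congr3 {f g : V → V → V → ℝ} (h : f = g) (x y z : V) : f x y z = g x y z := by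
  rw [h]

lemma aux_qk_B_phi (hQK : MemQK φ ξ η F) (hz : φ ξ = 0) (h1 : η ξ = 1) (x z : V) :
    F (φ x) ξ (φ z) = F x ξ z := by
  have h4 := aux_congr3 hQK.2.1 x ξ z
  have hz0 : F (φ x) ξ (φ ξ) = 0 := by
    rw [hz]
    exact (hQK.1.1.1.2.2 (φ x) ξ).map_zero
  simp only [F4, h1, one_mul] at h4
  rw [hz0, mul_zero, sub_zero] at h4
  exact h4.symm

lemma aux_qk_B_antisym (hQK : MemQK φ ξ η F) (h1 : η ξ = 1) (x z : V) :
    F z ξ x = -F x ξ z := by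
  have h5 := aux_congr3 hQK.2.2 x ξ z
  simp only [Pi.neg_apply, F5, h1, one_mul] at h5
  rw [hQK.1.2.2 ξ x, mul_zero, sub_zero] at h5
  linarith

lemma aux_qk_eq (hQK : MemQK φ ξ η F) (hz : φ ξ = 0) (h1 : η ξ = 1) (x y z : V) :
    F x y z = η y * F x ξ z - η z * F x ξ y := by
  have h4 := aux_congr3 hQK.2.1 x y z
  rw [h4]
  simp only [F4]
  rw [aux_qk_B_phi hQK hz h1, aux_qk_B_phi hQK hz h1]

lemma aux_qk_F2 (hQK : MemQK φ ξ η F) (hz : φ ξ = 0) (h1 : η ξ = 1) (x y z : V) :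
    F2 ξ η F x y z = F x y z := (aux_qk_eq hQK hz h1 x y z).symm

lemma aux_qk_F5 (hQK : MemQK φ ξ η F) (hz : φ ξ = 0) (h1 : η ξ = 1) (x y z : V) :
    F5 ξ η F x y z = -F x y z := by
  simp only [F5]
  rw [aux_qk_B_antisym hQK h1 x z, aux_qk_B_antisym hQK h1 x y,
    aux_qk_eq hQK hz h1 x y z]
  ring

lemma aux_qk_F6 (hQK : MemQK φ ξ η F) (hz : φ ξ = 0) (h1 : η ξ = 1) (x y z : V) :
    F6 φ ξ η F x y z = -F x y z := by
  simp only [F6]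
  rw [aux_qk_B_phi hQK hz h1 z x, aux_qk_B_phi hQK hz h1 y x,
    aux_qk_B_antisym hQK h1 x z, aux_qk_B_antisym hQK h1 x y,
    aux_qk_eq hQK hz h1 x y z]
  ring

/-- Closure of `𝒬𝒦𝔽` under linear combinations. -/
lemma aux_memQK_comb {F G : V → V → V → ℝ} (a b : ℝ) (hF : MemQK φ ξ η F)
    (hG : MemQK φ ξ η G) : MemQK φ ξ η (fun x y z => a * F x y z + b * G x y z) := by
  obtain ⟨⟨⟨⟨hFt1, hFt2, hFt3⟩, hFa, hFs⟩, hFh, hFxi⟩, hF4, hF5⟩ := hF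
  obtain ⟨⟨⟨⟨hGt1, hGt2, hGt3⟩, hGa, hGs⟩, hGh, hGxi⟩, hG4, hG5⟩ := hG
  refine ⟨⟨⟨⟨?_, ?_, ?_⟩, ?_, ?_⟩, ?_, ?_⟩, ?_, ?_⟩
  · refine fun y z => ⟨fun u v => ?_, fun c u => ?_⟩ <;> beta_reduce
    · rw [(hFt1 y z).map_add, (hGt1 y z).map_add]; beta_reduce; ring
    · rw [(hFt1 y z).map_smul, (hGt1 y z).map_smul]; beta_reduce
      simp only [smul_eq_mul]; ring
  · refine fun x z => ⟨fun u v => ?_, fun c u => ?_⟩ <;> beta_reduce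
    · rw [(hFt2 x z).map_add, (hGt2 x z).map_add]; beta_reduce; ring
    · rw [(hFt2 x z).map_smul, (hGt2 x z).map_smul]; beta_reduce
      simp only [smul_eq_mul]; ring
  · refine fun x y => ⟨fun u v => ?_, fun c u => ?_⟩ <;> beta_reduce
    · rw [(hFt3 x y).map_add, (hGt3 x y).map_add]; beta_reduce; ring
    · rw [(hFt3 x y).map_smul, (hGt3 x y).map_smul]; beta_reduce
      simp only [smul_eq_mul]; ring
  · intro x y z; beta_reduce; rw [hFa x y z, hGa x y z]; ring
  · intro x y z; beta_reduce; linear_combination a * hFs x y z + b * hGs x y z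
  · funext x y z
    simp only [hF, Pi.zero_apply]
    have e1 := aux_congr3 hFh x y z
    have e2 := aux_congr3 hGh x y z
    simp only [hF, Pi.zero_apply] at e1 e2
    show a * F _ _ _ + b * G _ _ _ = 0
    rw [e1, e2]; ring
  · intro y z; beta_reduce; rw [hFxi y z, hGxi y z]; ring
  · funext x y z
    have e1 := aux_congr3 hF4 x y z
    have e2 := aux_congr3 hG4 x y z
    simp only [F4] at e1 e2 ⊢
    beta_reduce
    linear_combination a * e1 + b * e2
  · funext x y z
    have e1 := aux_congr3 hF5 x y z
    have e2 := aux_congr3 hG5 x y z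
    simp only [Pi.neg_apply, F5] at e1 e2 ⊢
    beta_reduce
    linear_combination a * e1 + b * e2

end AuxQK
section AuxInner

variable {V : Type*} [NormedAddCommGroup V] [InnerProductSpace ℝ V]
variable {n : ℕ} {φ : V →ₗ[ℝ] V} {ξ : V} {η : V →ₗ[ℝ] ℝ}
variable {ι : Type*} [Fintype ι]

lemma aux_fstar_F8 (h : ACM n φ ξ η) (hn : 1 ≤ n) (e : OrthonormalBasis ι ℝ V)
    (hcard : (Fintype.card ι : ℝ) = 2 * n + 1) (F : V → V → V → ℝ) :
    fTrStar φ e (F8 n φ e ξ η F) ξ = fTrStar φ e F ξ := by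
  have hn' : (n : ℝ) ≠ 0 := by
    have : (1 : ℝ) ≤ (n : ℝ) := by exact_mod_cast hn
    linarith
  have h1 : fTrStar φ e (F8 n φ e ξ η F) ξ =
      (-(1 / (2 * (n : ℝ))) * fTrStar φ e F ξ) * fTrStar φ e (auxPhi φ η) ξ := by
    rw [aux_F8_eq]
    unfold fTrStar
    conv_rhs => rw [Finset.mul_sum]
  rw [h1, aux_fstar_Phi h e hcard]
  field_simp

lemma aux_inner_comm (e : OrthonormalBasis ι ℝ V) (F G : V → V → V → ℝ) :
    innerF e F G = innerF e G F := by
  unfold innerF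
  exact Finset.sum_congr rfl fun i _ => Finset.sum_congr rfl fun j _ =>
    Finset.sum_congr rfl fun k _ => mul_comm _ _

lemma aux_inner_smul_left (e : OrthonormalBasis ι ℝ V) (c : ℝ) (F G : V → V → V → ℝ) :
    innerF e (fun x y z => c * F x y z) G = c * innerF e F G := by
  unfold innerF
  rw [Finset.mul_sum]
  refine Finset.sum_congr rfl fun i _ => ?_
  rw [Finset.mul_sum]
  refine Finset.sum_congr rfl fun j _ => ?_
  rw [Finset.mul_sum]
  exact Finset.sum_congr rfl fun k _ => by ring

/-- Expansion of the inner product for `F - a·P` against `G - b·P`. -/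
lemma aux_inner_expand (e : OrthonormalBasis ι ℝ V) (F G P : V → V → V → ℝ) (a b : ℝ) :
    innerF e (fun x y z => F x y z - a * P x y z) (fun x y z => G x y z - b * P x y z) =
      innerF e F G - b * innerF e F P - a * innerF e P G + a * b * innerF e P P := by
  unfold innerF
  simp only [Finset.mul_sum]
  rw [← Finset.sum_sub_distrib, ← Finset.sum_sub_distrib, ← Finset.sum_add_distrib]
  refine Finset.sum_congr rfl fun i _ => ?_
  rw [← Finset.sum_sub_distrib, ← Finset.sum_sub_distrib, ← Finset.sum_add_distrib]
  refine Finset.sum_congr rfl fun j _ => ?_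
  rw [← Finset.sum_sub_distrib, ← Finset.sum_sub_distrib, ← Finset.sum_add_distrib]
  exact Finset.sum_congr rfl fun k _ => by ring

/-- `⟨F, Φ⟩ = -2 f*(F)(ξ)` for `F` trilinear and antisymmetric in the last two arguments. -/
lemma aux_inner_Phi (h : ACM n φ ξ η) (e : OrthonormalBasis ι ℝ V) (F : V → V → V → ℝ)
    (htri : Trilinear F) (halt : ∀ x y z, F x y z = -F x z y) :
    innerF e F (auxPhi φ η) = -2 * fTrStar φ e F ξ := by
  obtain ⟨ht1, ht2, ht3⟩ := htri
  have heta := aux_eta_eq h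
  -- inner sum over k and the j-trace
  have hS1 : ∀ i j : ι, ∑ k, F (e i) (e j) (e k) * (η (e k) * ⟪e i, φ (e j)⟫) =
      F (e i) (e j) ξ * ⟪e i, φ (e j)⟫ := by
    intro i j
    have := aux_sum_inner e (fun v => F (e i) (e j) v * ⟪e i, φ (e j)⟫)
      ⟨fun u v => by beta_reduce; rw [(ht3 (e i) (e j)).map_add]; ring,
       fun c u => by beta_reduce; rw [(ht3 (e i) (e j)).map_smul]
                     simp only [smul_eq_mul]; ring⟩ ξ
    rw [← this]
    refine Finset.sum_congr rfl fun k _ => ?_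
    rw [heta (e k)]; ring
  have hS2 : ∀ i k : ι, ∑ j, F (e i) (e j) (e k) * (η (e j) * ⟪e i, φ (e k)⟫) =
      F (e i) ξ (e k) * ⟪e i, φ (e k)⟫ := by
    intro i k
    have := aux_sum_inner e (fun v => F (e i) v (e k) * ⟪e i, φ (e k)⟫)
      ⟨fun u v => by beta_reduce; rw [(ht2 (e i) (e k)).map_add]; ring,
       fun c u => by beta_reduce; rw [(ht2 (e i) (e k)).map_smul]
                     simp only [smul_eq_mul]; ring⟩ ξ
    rw [← this]
    refine Finset.sum_congr rfl fun j _ => ?_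
    rw [heta (e j)]; ring
  have key : innerF e F (auxPhi φ η) =
      (∑ j, F (φ (e j)) (e j) ξ) - (∑ k, F (φ (e k)) ξ (e k)) := by
    unfold innerF
    have step1 : ∀ i : ι, ∑ j, ∑ k, F (e i) (e j) (e k) * auxPhi φ η (e i) (e j) (e k) =
        (∑ j, F (e i) (e j) ξ * ⟪e i, φ (e j)⟫) - (∑ k, F (e i) ξ (e k) * ⟪e i, φ (e k)⟫) := by
      intro i
      have : ∀ j : ι, ∑ k, F (e i) (e j) (e k) * auxPhi φ η (e i) (e j) (e k) =
          F (e i) (e j) ξ * ⟪e i, φ (e j)⟫ -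
            ∑ k, F (e i) (e j) (e k) * (η (e j) * ⟪e i, φ (e k)⟫) := by
        intro j
        rw [← hS1 i j, ← Finset.sum_sub_distrib]
        exact Finset.sum_congr rfl fun k _ => by simp only [auxPhi]; ring
      rw [Finset.sum_congr rfl fun j _ => this j, Finset.sum_sub_distrib]
      congr 1
      rw [Finset.sum_comm]
      exact Finset.sum_congr rfl fun k _ => hS2 i k
    rw [Finset.sum_congr rfl fun i _ => step1 i, Finset.sum_sub_distrib]
    congr 1
    · rw [Finset.sum_comm]
      refine Finset.sum_congr rfl fun j _ => ?_
      have := aux_sum_inner e (fun v => F v (e j) ξ) (ht1 (e j) ξ) (φ (e j))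
      rw [← this]
      exact Finset.sum_congr rfl fun i _ => by ring
    · rw [Finset.sum_comm]
      refine Finset.sum_congr rfl fun k _ => ?_
      have := aux_sum_inner e (fun v => F v ξ (e k)) (ht1 ξ (e k)) (φ (e k))
      rw [← this]
      exact Finset.sum_congr rfl fun i _ => by ring
  rw [key]
  have hswap : ∀ j : ι, F (φ (e j)) (e j) ξ = -F (φ (e j)) ξ (e j) := fun j => halt _ _ _
  rw [Finset.sum_congr rfl fun j _ => hswap j, Finset.sum_neg_distrib]
  have htr : ∑ k, F (φ (e k)) ξ (e k) = -∑ k, F (e k) ξ (φ (e k)) :=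
    aux_trace_transpose h e (fun a b => F a ξ b) (fun y => ht1 ξ y) (fun x => ht3 x ξ)
  rw [htr]
  have hstar : ∑ k, F (e k) ξ (φ (e k)) = -fTrStar φ e F ξ := by
    unfold fTrStar
    rw [← Finset.sum_neg_distrib]
    exact Finset.sum_congr rfl fun k _ => by rw [halt (e k) ξ (φ (e k))]; try ring
  rw [hstar]
  ring

/-- Invariance of the trace of a bilinear form under an isometry-image of the basis. -/
lemma aux_trace_inv (e : OrthonormalBasis ι ℝ V) (A : V ≃ₗᵢ[ℝ] V) (f : V → V → ℝ)
    (hf1 : ∀ y, IsLinearMap ℝ fun x => f x y) (hf2 : ∀ x, IsLinearMap ℝ (f x)) :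
    ∑ i, f (A.symm (e i)) (A.symm (e i)) = ∑ i, f (e i) (e i) := by
  set s : ι → V := fun i => A.symm (e i) with hs
  have hsi : ∀ (x : V) (i : ι), ⟪x, s i⟫ = ⟪A x, e i⟫ := by
    intro x i
    rw [hs]
    calc ⟪x, A.symm (e i)⟫ = ⟪A x, A (A.symm (e i))⟫ := (A.inner_map_map _ _).symm
      _ = ⟪A x, e i⟫ := by rw [A.apply_symm_apply]
  calc ∑ i, f (s i) (s i)
      = ∑ i, ∑ k, ⟪e k, s i⟫ * f (s i) (e k) := by
        refine Finset.sum_congr rfl fun i _ => ?_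
        exact (aux_sum_inner e (f (s i)) (hf2 (s i)) (s i)).symm
    _ = ∑ i, ∑ k, ∑ j, ⟪e k, s i⟫ * (⟪e j, s i⟫ * f (e j) (e k)) := by
        refine Finset.sum_congr rfl fun i _ => Finset.sum_congr rfl fun k _ => ?_
        rw [← aux_sum_inner e (fun v => f v (e k)) (hf1 (e k)) (s i), Finset.mul_sum]
    _ = ∑ k, ∑ j, ∑ i, ⟪e k, s i⟫ * (⟪e j, s i⟫ * f (e j) (e k)) := by
        rw [Finset.sum_comm]
        exact Finset.sum_congr rfl fun k _ => Finset.sum_comm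
    _ = ∑ k, ∑ j, ⟪e j, e k⟫ * f (e j) (e k) := by
        refine Finset.sum_congr rfl fun k _ => Finset.sum_congr rfl fun j _ => ?_
        have hkey : ∑ i, ⟪e k, s i⟫ * ⟪e j, s i⟫ = ⟪e j, e k⟫ := by
          calc ∑ i, ⟪e k, s i⟫ * ⟪e j, s i⟫
              = ∑ i, ⟪A (e j), e i⟫ * ⟪e i, A (e k)⟫ := by
                refine Finset.sum_congr rfl fun i _ => ?_
                rw [hsi (e k) i, hsi (e j) i, real_inner_comm (A (e k)) (e i)]
                ring
            _ = ⟪A (e j), A (e k)⟫ := e.sum_inner_mul_inner _ _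
            _ = ⟪e j, e k⟫ := A.inner_map_map _ _
        calc ∑ i, ⟪e k, s i⟫ * (⟪e j, s i⟫ * f (e j) (e k))
            = (∑ i, ⟪e k, s i⟫ * ⟪e j, s i⟫) * f (e j) (e k) := by
              rw [Finset.sum_mul]
              exact Finset.sum_congr rfl fun i _ => by ring
          _ = ⟪e j, e k⟫ * f (e j) (e k) := by rw [hkey]
    _ = ∑ k, f (e k) (e k) := by
        refine Finset.sum_congr rfl fun k _ => ?_
        exact aux_sum_inner e (fun v => f v (e k)) (hf1 (e k)) (e k)

end AuxInner
theorem stmt15 (n : ℕ) (φ : V →ₗ[ℝ] V) (ξ : V) (η : V →ₗ[ℝ] ℝ)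
    (hacm : ACM n φ ξ η) (hn : 1 ≤ n) (e : OrthonormalBasis (Fin (2 * n + 1)) ℝ V) :
    (∀ F, MemQK φ ξ η F → MemQK φ ξ η (L7 n φ e ξ η F)) ∧
    (∀ (a : ℝ) (F G : V → V → V → ℝ),
      L7 n φ e ξ η (fun x y z => a * F x y z + G x y z) =
        fun x y z => a * L7 n φ e ξ η F x y z + L7 n φ e ξ η G x y z) ∧
    (∀ F, MemQK φ ξ η F → L7 n φ e ξ η (L7 n φ e ξ η F) = F) ∧
    (∀ F G, MemQK φ ξ η F → MemQK φ ξ η G →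
      innerF e (L7 n φ e ξ η F) (L7 n φ e ξ η G) = innerF e F G) ∧
    (∀ A : V ≃ₗᵢ[ℝ] V, (∀ x, A (φ x) = φ (A x)) → A ξ = ξ →
      ∀ F, MemQK φ ξ η F → L7 n φ e ξ η (actA A F) = actA A (L7 n φ e ξ η F)) ∧
    (∀ F, MemQK φ ξ η F →
      (L7 n φ e ξ η F = -F ↔ MemF3sub n e φ ξ η F) ∧
      (L7 n φ e ξ η F = F ↔ MemF5sub n e φ ξ η F)) ∧
    (∀ F, MemQK φ ξ η F →
      MemF3sub n e φ ξ η (F8 n φ e ξ η F) ∧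
      MemF5sub n e φ ξ η (fun x y z => (1 / 4) * (F2 ξ η F x y z +
        F4 φ ξ η F x y z - F5 ξ η F x y z - F6 φ ξ η F x y z -
        4 * F8 n φ e ξ η F x y z)) ∧
      ∀ x y z, F x y z = F8 n φ e ξ η F x y z +
        (1 / 4) * (F2 ξ η F x y z + F4 φ ξ η F x y z - F5 ξ η F x y z -
          F6 φ ξ η F x y z - 4 * F8 n φ e ξ η F x y z)) ∧
    (∀ F, MemQK φ ξ η F →
      ∃! p : (V → V → V → ℝ) × (V → V → V → ℝ),
        MemF3sub n e φ ξ η p.1 ∧ MemF5sub n e φ ξ η p.2 ∧ F = p.1 + p.2) ∧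
    (∀ F G, MemF3sub n e φ ξ η F → MemF5sub n e φ ξ η G → innerF e F G = 0) := by
  have hz : φ ξ = 0 := hacm.2.2.1
  have h1 : η ξ = 1 := aux_eta_xi hacm
  have hn' : (n : ℝ) ≠ 0 := by
    have : (1 : ℝ) ≤ (n : ℝ) := by exact_mod_cast hn
    linarith
  have hcard : ((Fintype.card (Fin (2 * n + 1)) : ℕ) : ℝ) = 2 * (n : ℝ) + 1 := by
    rw [Fintype.card_fin]; push_cast; ring
  have hPhiQK : MemQK φ ξ η (auxPhi φ η) := aux_memQK_Phi hacm
  have hPhiAlt : ∀ x y z : V, auxPhi φ η x y z = -auxPhi φ η x z y := fun x y z => by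
    simp only [auxPhi]; ring
  have hfPhi : fTrStar φ e (auxPhi φ η) ξ = -(2 * (n : ℝ)) := aux_fstar_Phi hacm e hcard
  -- pointwise descriptions
  have hF8pt : ∀ (H : V → V → V → ℝ) (x y z : V), F8 n φ e ξ η H x y z =
      (-(1 / (2 * (n : ℝ))) * fTrStar φ e H ξ) * auxPhi φ η x y z := fun H x y z => rfl
  have hL7pt : ∀ (H : V → V → V → ℝ) (x y z : V), L7 n φ e ξ η H x y z =
      H x y z - 2 * ((-(1 / (2 * (n : ℝ))) * fTrStar φ e H ξ) * auxPhi φ η x y z) :=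
    fun H x y z => rfl
  have hfs8 : ∀ H : V → V → V → ℝ, fTrStar φ e (F8 n φ e ξ η H) ξ = fTrStar φ e H ξ :=
    fun H => aux_fstar_F8 hacm hn e hcard H
  -- fTrStar of L7
  have hfsL7 : ∀ H : V → V → V → ℝ, fTrStar φ e (L7 n φ e ξ η H) ξ = -fTrStar φ e H ξ := by
    intro H
    have hsplit : fTrStar φ e (L7 n φ e ξ η H) ξ =
        fTrStar φ e H ξ - 2 * fTrStar φ e (F8 n φ e ξ η H) ξ := by
      unfold fTrStar L7
      rw [Finset.mul_sum, ← Finset.sum_sub_distrib]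
    rw [hsplit, hfs8 H]; ring
  -- L7 as a combination
  have hL7comb : ∀ H : V → V → V → ℝ, L7 n φ e ξ η H = fun x y z =>
      1 * H x y z + ((1 / (n : ℝ)) * fTrStar φ e H ξ) * auxPhi φ η x y z := by
    intro H; funext x y z
    rw [hL7pt]
    field_simp
    ring
  -- fTrStar of a difference  F - F8 F
  have hfsdiff : ∀ H : V → V → V → ℝ,
      fTrStar φ e (fun x y z => H x y z - F8 n φ e ξ η H x y z) ξ = 0 := by
    intro H
    have hsplit : fTrStar φ e (fun x y z => H x y z - F8 n φ e ξ η H x y z) ξ =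
        fTrStar φ e H ξ - fTrStar φ e (F8 n φ e ξ η H) ξ := by
      unfold fTrStar
      rw [← Finset.sum_sub_distrib]
    rw [hsplit, hfs8 H, sub_self]
  -- MemQK of F8 H for H ∈ QK
  have hF8QK : ∀ H : V → V → V → ℝ, MemQK φ ξ η H → MemQK φ ξ η (F8 n φ e ξ η H) := by
    intro H hH
    have heq : F8 n φ e ξ η H = fun x y z =>
        0 * H x y z + (-(1 / (2 * (n : ℝ))) * fTrStar φ e H ξ) * auxPhi φ η x y z := by
      funext x y z; rw [hF8pt]; ring
    rw [heq]
    exact aux_memQK_comb _ _ hH hPhiQK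
  -- MemQK of H - F8 H
  have hdiffQK : ∀ H : V → V → V → ℝ, MemQK φ ξ η H →
      MemQK φ ξ η (fun x y z => H x y z - F8 n φ e ξ η H x y z) := by
    intro H hH
    have heq : (fun x y z => H x y z - F8 n φ e ξ η H x y z) = fun x y z =>
        1 * H x y z + ((1 / (2 * (n : ℝ))) * fTrStar φ e H ξ) * auxPhi φ η x y z := by
      funext x y z; rw [hF8pt]; ring
    rw [heq]
    exact aux_memQK_comb _ _ hH hPhiQK
  -- MemF3sub of F8 H
  have hF8mem : ∀ H : V → V → V → ℝ, MemQK φ ξ η H → MemF3sub n e φ ξ η (F8 n φ e ξ η H) := by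
    intro H hH
    refine ⟨(hF8QK H hH).1.1, ?_⟩
    funext x y z
    rw [hF8pt (F8 n φ e ξ η H) x y z, hfs8 H, hF8pt H x y z]
  -- MemF5sub of H - F8 H
  have hdiffmem : ∀ H : V → V → V → ℝ, MemQK φ ξ η H →
      MemF5sub n e φ ξ η (fun x y z => H x y z - F8 n φ e ξ η H x y z) := by
    intro H hH
    have h' := hdiffQK H hH
    exact ⟨h'.1.1, h'.2.1, h'.2.2, hfsdiff H⟩
  refine ⟨?_, ?_, ?_, ?_, ?_, ?_, ?_, ?_, ?_⟩
  · -- (1) L7 preserves QK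
    intro F hF
    rw [hL7comb F]
    exact aux_memQK_comb _ _ hF hPhiQK
  · -- (2) linearity
    intro a F G
    funext x y z
    have hfs : fTrStar φ e (fun x y z => a * F x y z + G x y z) ξ =
        a * fTrStar φ e F ξ + fTrStar φ e G ξ := by
      unfold fTrStar
      rw [Finset.mul_sum, ← Finset.sum_add_distrib]
    rw [hL7pt, hL7pt, hL7pt, hfs]
    beta_reduce
    ring
  · -- (3) involution
    intro F _
    funext x y z
    rw [hL7pt, hfsL7 F, hL7pt]
    ring
  · -- (4) isometry
    intro F G hQF hQG
    have hFP : innerF e F (auxPhi φ η) = -2 * fTrStar φ e F ξ :=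
      aux_inner_Phi hacm e F hQF.1.1.1 hQF.1.1.2.1
    have hGP : innerF e G (auxPhi φ η) = -2 * fTrStar φ e G ξ :=
      aux_inner_Phi hacm e G hQG.1.1.1 hQG.1.1.2.1
    have hPP : innerF e (auxPhi φ η) (auxPhi φ η) = -2 * fTrStar φ e (auxPhi φ η) ξ :=
      aux_inner_Phi hacm e (auxPhi φ η) aux_tri_Phi hPhiAlt
    have hL7F : L7 n φ e ξ η F = fun x y z =>
        F x y z - (2 * (-(1 / (2 * (n : ℝ))) * fTrStar φ e F ξ)) * auxPhi φ η x y z := by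
      funext x y z; rw [hL7pt]; ring
    have hL7G : L7 n φ e ξ η G = fun x y z =>
        G x y z - (2 * (-(1 / (2 * (n : ℝ))) * fTrStar φ e G ξ)) * auxPhi φ η x y z := by
      funext x y z; rw [hL7pt]; ring
    rw [hL7F, hL7G, aux_inner_expand, hFP, aux_inner_comm e (auxPhi φ η) G, hGP, hPP, hfPhi]
    field_simp
    ring
  · -- (5) commutes with the action of A
    intro A hAφ hAξ F hQF
    obtain ⟨ht1, ht2, ht3⟩ := hQF.1.1.1
    have hAsφ : ∀ x, A.symm (φ x) = φ (A.symm x) := by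
      intro x
      have h2 : A (φ (A.symm x)) = φ x := by rw [hAφ, A.apply_symm_apply]
      calc A.symm (φ x) = A.symm (A (φ (A.symm x))) := by rw [h2]
        _ = φ (A.symm x) := A.symm_apply_apply _
    have hAsξ : A.symm ξ = ξ := A.injective (by rw [A.apply_symm_apply, hAξ])
    have hfstar : fTrStar φ e (actA A F) ξ = fTrStar φ e F ξ := by
      unfold fTrStar actA
      have hterm : ∀ i, F (A.symm (e i)) (A.symm (φ (e i))) (A.symm ξ) =
          F (A.symm (e i)) (φ (A.symm (e i))) ξ := fun i => by rw [hAsφ, hAsξ]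
      rw [Finset.sum_congr rfl fun i _ => hterm i]
      exact aux_trace_inv e A (fun a b => F a (φ b) ξ)
        (fun y => ht1 (φ y) ξ)
        (fun x => ⟨fun u v => by beta_reduce; rw [map_add, (ht2 x ξ).map_add],
          fun c u => by beta_reduce; rw [map_smul, (ht2 x ξ).map_smul]⟩)
    have hPhiA : ∀ x y z : V, auxPhi φ η (A.symm x) (A.symm y) (A.symm z) =
        auxPhi φ η x y z := by
      intro x y z
      have hη : ∀ w, η (A.symm w) = η w := fun w => by
        rw [aux_eta_eq hacm, aux_eta_eq hacm w]
        conv_lhs => rw [← hAsξ]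
        exact A.symm.inner_map_map w ξ
      have hip : ∀ u v, ⟪A.symm u, φ (A.symm v)⟫ = ⟪u, φ v⟫ := fun u v => by
        rw [← hAsφ, LinearIsometryEquiv.inner_map_map]
      simp only [auxPhi, hη, hip]
    funext x y z
    show L7 n φ e ξ η (actA A F) x y z = L7 n φ e ξ η F (A.symm x) (A.symm y) (A.symm z)
    rw [hL7pt, hL7pt, hfstar, hPhiA]
    rfl
  · -- (6) eigenspace characterizations
    intro F hQF
    have hpt : ∀ x y z : V, L7 n φ e ξ η F x y z = F x y z - 2 * F8 n φ e ξ η F x y z :=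
      fun x y z => rfl
    constructor
    · constructor
      · intro hL
        refine ⟨hQF.1.1, ?_⟩
        funext x y z
        have h' := aux_congr3 hL x y z
        simp only [Pi.neg_apply] at h'
        rw [hpt] at h'
        linarith
      · intro hm
        funext x y z
        show L7 n φ e ξ η F x y z = -F x y z
        rw [hpt, ← aux_congr3 hm.2 x y z]
        ring
    · constructor
      · intro hL
        have h0 : fTrStar φ e F ξ = 0 := by
          have h' := hfsL7 F
          rw [hL] at h'
          linarith
        exact ⟨hQF.1.1, hQF.2.1, hQF.2.2, h0⟩
      · intro hm
        funext x y z
        rw [hL7pt, hm.2.2.2]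
        ring
  · -- (7) components
    intro F hQF
    have hGeq : (fun x y z => (1 / 4 : ℝ) * (F2 ξ η F x y z + F4 φ ξ η F x y z -
        F5 ξ η F x y z - F6 φ ξ η F x y z - 4 * F8 n φ e ξ η F x y z)) =
        fun x y z => F x y z - F8 n φ e ξ η F x y z := by
      funext x y z
      rw [aux_qk_F2 hQF hz h1, ← aux_congr3 hQF.2.1 x y z, aux_qk_F5 hQF hz h1,
        aux_qk_F6 hQF hz h1]
      ring
    refine ⟨hF8mem F hQF, ?_, ?_⟩
    · rw [hGeq]
      exact hdiffmem F hQF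
    · intro x y z
      rw [aux_qk_F2 hQF hz h1, ← aux_congr3 hQF.2.1 x y z, aux_qk_F5 hQF hz h1,
        aux_qk_F6 hQF hz h1]
      ring
  · -- (8) unique decomposition
    intro F hQF
    refine ⟨(F8 n φ e ξ η F, fun x y z => F x y z - F8 n φ e ξ η F x y z),
      ⟨hF8mem F hQF, hdiffmem F hQF, ?_⟩, ?_⟩
    · funext x y z
      show F x y z = F8 n φ e ξ η F x y z + (F x y z - F8 n φ e ξ η F x y z)
      ring
    · rintro ⟨G3, G5⟩ ⟨h3, h5, hsum⟩
      have hf5 : fTrStar φ e G5 ξ = 0 := h5.2.2.2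
      have hfF : fTrStar φ e F ξ = fTrStar φ e G3 ξ := by
        have hsplit : fTrStar φ e F ξ = fTrStar φ e G3 ξ + fTrStar φ e G5 ξ := by
          rw [hsum]
          unfold fTrStar
          rw [← Finset.sum_add_distrib]
          exact Finset.sum_congr rfl fun i _ => rfl
        rw [hsplit, hf5, add_zero]
      have hG3 : G3 = F8 n φ e ξ η F := by
        have h32 : G3 = F8 n φ e ξ η G3 := h3.2
        rw [h32]
        funext x y z
        rw [hF8pt, hF8pt, ← hfF]
      have hG5 : G5 = fun x y z => F x y z - F8 n φ e ξ η F x y z := by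
        funext x y z
        have h' := aux_congr3 hsum x y z
        simp only [Pi.add_apply] at h'
        rw [← hG3]
        linarith
      exact Prod.ext hG3 hG5
  · -- (9) orthogonality
    intro F G h3 h5
    have hFeq : F = fun x y z =>
        (-(1 / (2 * (n : ℝ))) * fTrStar φ e F ξ) * auxPhi φ η x y z := by
      funext x y z
      rw [aux_congr3 h3.2 x y z, hF8pt]
    have hGP : innerF e G (auxPhi φ η) = -2 * fTrStar φ e G ξ :=
      aux_inner_Phi hacm e G h5.1.1 h5.1.2.1
    conv_lhs => rw [hFeq]
    rw [aux_inner_smul_left, aux_inner_comm e (auxPhi φ η) G, hGP, h5.2.2.2]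
    ring
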